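/- Let v ≥ 0 and y ∈ ℝ. A point x ∈ ℝ is a global minimizer of the function t ↦ (1/2)(y − t)² + v|t| if and only if either (i) x ≠ 0 and y − x = v · sgn(x), or (ii) x = 0 and |y| ≤ v. Consequently this minimizer equals Soft_v(y) = sgn(y) · max(|y| − v, 0). -/
import Mathlib


/-- Soft thresholding operator: `Soft_v(y) = sgn(y) * max(|y| - v, 0)`. -/
noncomputable def softThreshold (v y : ℝ) : ℝ :=
  Real.sign y * max (|y| - v) 0

/-- Let `v ≥ 0` and `y ∈ ℝ`. A point `x ∈ ℝ` is a global minimizer of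
`t ↦ (1/2) * (y - t)^2 + v * |t|` if and only if either (i) `x ≠ 0` and
`y - x = v * sgn(x)`, or (ii) `x = 0` and `|y| ≤ v`. Consequently, any such
global minimizer equals `Soft_v(y)`. -/
theorem soft_thresholding_characterization (v y : ℝ) (hv : 0 ≤ v) :
    (∀ x : ℝ,
      ((∀ t : ℝ, (1 / 2) * (y - x) ^ 2 + v * |x| ≤ (1 / 2) * (y - t) ^ 2 + v * |t|) ↔
        ((x ≠ 0 ∧ y - x = v * Real.sign x) ∨ (x = 0 ∧ |y| ≤ v)))) ∧
    (∀ x : ℝ,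
      (∀ t : ℝ, (1 / 2) * (y - x) ^ 2 + v * |x| ≤ (1 / 2) * (y - t) ^ 2 + v * |t|) →
        x = softThreshold v y) := by
  have key : ∀ x : ℝ,
      ((∀ t : ℝ, (1 / 2) * (y - x) ^ 2 + v * |x| ≤ (1 / 2) * (y - t) ^ 2 + v * |t|) ↔
        ((x ≠ 0 ∧ y - x = v * Real.sign x) ∨ (x = 0 ∧ |y| ≤ v))) := by
    intro x
    constructor
    · intro hmin
      by_cases hx : x = 0
      · right
        refine ⟨hx, ?_⟩
        subst hx
        by_contra h
        push_neg at h
        rcases lt_trichotomy y 0 with hy | hy | hy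
        · -- y < 0, |y| = -y, v < -y; take t = y + v < 0
          rw [abs_of_neg hy] at h
          have ht := hmin (y + v)
          rw [abs_zero, abs_of_neg (by linarith : y + v < 0)] at ht
          nlinarith [sq_nonneg (y + v)]
        · simp [hy] at h; linarith
        · rw [abs_of_pos hy] at h
          have ht := hmin (y - v)
          rw [abs_zero, abs_of_pos (by linarith : 0 < y - v)] at ht
          nlinarith [sq_nonneg (y - v)]
      · left
        refine ⟨hx, ?_⟩
        rcases lt_trichotomy x 0 with hxneg | h0 | hxpos
        · rw [Real.sign_of_neg hxneg]
          by_contra hc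
          set c : ℝ := x - y - v with hcdef
          have hc0 : c ≠ 0 := by
            intro h0; apply hc; rw [hcdef] at h0; linarith [h0]
          rcases lt_or_gt_of_ne hc0 with hcneg | hcpos
          · -- c < 0 : take t = x + m, m = min (-x/2) (-c)
            set m : ℝ := min (-x / 2) (-c) with hm
            have hm1 : m ≤ -x / 2 := min_le_left _ _
            have hm2 : m ≤ -c := min_le_right _ _
            have hmpos : 0 < m := lt_min (by linarith) (by linarith)
            have ht := hmin (x + m)
            rw [abs_of_neg hxneg, abs_of_neg (by linarith : x + m < 0)] at ht
            nlinarith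
          · -- c > 0 : take t = x - c < x < 0
            have ht := hmin (x - c)
            rw [abs_of_neg hxneg, abs_of_neg (by linarith : x - c < 0)] at ht
            nlinarith
        · exact absurd h0 hx
        · rw [Real.sign_of_pos hxpos]
          by_contra hc
          set c : ℝ := x - y + v with hcdef
          have hc0 : c ≠ 0 := by
            intro h0; apply hc; rw [hcdef] at h0; linarith [h0]
          rcases lt_or_gt_of_ne hc0 with hcneg | hcpos
          · -- c < 0 : take t = x - c > x > 0
            have ht := hmin (x - c)
            rw [abs_of_pos hxpos, abs_of_pos (by linarith : (0:ℝ) < x - c)] at ht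
            nlinarith
          · -- c > 0 : take t = x - m, m = min (x/2) c
            set m : ℝ := min (x / 2) c with hm
            have hm1 : m ≤ x / 2 := min_le_left _ _
            have hm2 : m ≤ c := min_le_right _ _
            have hmpos : 0 < m := lt_min (by linarith) (by linarith)
            have ht := hmin (x - m)
            rw [abs_of_pos hxpos, abs_of_pos (by linarith : (0:ℝ) < x - m)] at ht
            nlinarith
    · rintro (⟨hx, heq⟩ | ⟨hx, hy⟩)
      · intro t
        rcases lt_trichotomy x 0 with hxneg | h0 | hxpos
        · rw [Real.sign_of_neg hxneg] at heq
          rw [abs_of_neg hxneg]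
          nlinarith [le_abs_self t, neg_abs_le t, sq_nonneg (t - x), abs_nonneg t]
        · exact absurd h0 hx
        · rw [Real.sign_of_pos hxpos] at heq
          rw [abs_of_pos hxpos]
          nlinarith [le_abs_self t, neg_abs_le t, sq_nonneg (t - x), abs_nonneg t]
      · intro t
        subst hx
        rw [abs_zero]
        have h1 : y * t ≤ v * |t| := by
          calc y * t ≤ |y * t| := le_abs_self _
          _ = |y| * |t| := abs_mul y t
          _ ≤ v * |t| := mul_le_mul_of_nonneg_right hy (abs_nonneg t)
        nlinarith [sq_nonneg t]
  refine ⟨key, ?_⟩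
  intro x hmin
  rcases (key x).mp hmin with ⟨hx, heq⟩ | ⟨hx, hy⟩
  · rcases lt_trichotomy x 0 with hxneg | h0 | hxpos
    · rw [Real.sign_of_neg hxneg] at heq
      have hy : y < 0 := by linarith
      have : |y| - v = -x := by rw [abs_of_neg hy]; linarith
      rw [softThreshold, Real.sign_of_neg hy, this,
        max_eq_left (by linarith : (0:ℝ) ≤ -x)]
      ring
    · exact absurd h0 hx
    · rw [Real.sign_of_pos hxpos] at heq
      have hy : 0 < y := by linarith
      have : |y| - v = x := by rw [abs_of_pos hy]; linarith
      rw [softThreshold, Real.sign_of_pos hy, this,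
        max_eq_left (by linarith : (0:ℝ) ≤ x)]
      ring
  · rw [softThreshold, max_eq_right (by linarith : |y| - v ≤ 0), mul_zero, hx]
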